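/- Let 0 < f and M > 0, let Υ be a nonempty finite set of pairs (a,b) with associated real values d(a,b) satisfying 2f ≤ d(a,b) ≤ M, and define u(λ) = |Υ|^{−1} Σ_{(a,b)∈Υ} e^{−λ·d(a,b)} for λ ≥ 0. If λ, λ' ≥ 0 and λ − λ' ≥ β for some β ≥ 0, then u(λ') − u(λ) ≥ e^{−λM}·(e^{2fβ} − 1). -/
import Mathlib


open Real

/-- **Separation.** Let `Υ` be a nonempty finite set of pairs
with associated values `d(a,b) ∈ [2f, M]` and let
`u(λ) = |Υ|⁻¹ Σ_{(a,b)∈Υ} e^{-λ d(a,b)}`.  If `λ, λ' ≥ 0` and `λ - λ' ≥ β ≥ 0`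
then `u(λ') - u(λ) ≥ e^{-λM} (e^{2fβ} - 1)`. -/
theorem cluster_mean_separation {ι : Type*} (Υ : Finset ι) (hne : Υ.Nonempty)
    (d : ι → ℝ) (f M : ℝ) (hf : 0 < f) (hM : 0 < M)
    (hd : ∀ i ∈ Υ, 2 * f ≤ d i ∧ d i ≤ M)
    (lam lam' β : ℝ) (hlam : 0 ≤ lam) (hlam' : 0 ≤ lam')
    (hβ : 0 ≤ β) (hsep : β ≤ lam - lam') :
    exp (-(lam * M)) * (exp (2 * f * β) - 1) ≤
      (Υ.card : ℝ)⁻¹ * ∑ i ∈ Υ, exp (-(lam' * d i)) -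
        (Υ.card : ℝ)⁻¹ * ∑ i ∈ Υ, exp (-(lam * d i)) := by
  set K := exp (-(lam * M)) * (exp (2 * f * β) - 1) with hK
  have hcard : (0 : ℝ) < Υ.card := by
    exact_mod_cast Finset.card_pos.mpr hne
  have key : ∀ i ∈ Υ, K ≤ exp (-(lam' * d i)) - exp (-(lam * d i)) := by
    intro i hi
    obtain ⟨h1, h2⟩ := hd i hi
    have hdnn : 0 ≤ d i := le_trans (by positivity) h1
    have e1 : exp (-(lam' * d i)) - exp (-(lam * d i))
        = exp (-(lam * d i)) * (exp ((lam - lam') * d i) - 1) := by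
      rw [mul_sub, ← Real.exp_add]; ring_nf
    rw [e1, hK]
    have hb1 : exp (-(lam * M)) ≤ exp (-(lam * d i)) := by
      apply Real.exp_le_exp.mpr
      have := mul_le_mul_of_nonneg_left h2 hlam
      linarith
    have hb2 : exp (2 * f * β) - 1 ≤ exp ((lam - lam') * d i) - 1 := by
      have : 2 * f * β ≤ (lam - lam') * d i := by
        calc 2 * f * β = β * (2 * f) := by ring
        _ ≤ (lam - lam') * d i :=
          mul_le_mul hsep h1 (by positivity) (by linarith)
      simpa using Real.exp_le_exp.mpr this
    have hnn : 0 ≤ exp (2 * f * β) - 1 := by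
      have : (1:ℝ) ≤ exp (2 * f * β) := Real.one_le_exp (by positivity)
      linarith
    exact mul_le_mul hb1 hb2 hnn (Real.exp_pos _).le
  have hsum : (Υ.card : ℝ) * K ≤ ∑ i ∈ Υ, (exp (-(lam' * d i)) - exp (-(lam * d i))) := by
    calc (Υ.card : ℝ) * K = ∑ _i ∈ Υ, K := by rw [Finset.sum_const, nsmul_eq_mul]
    _ ≤ _ := Finset.sum_le_sum key
  rw [← mul_sub, ← Finset.sum_sub_distrib]
  rw [le_inv_mul_iff₀ hcard]
  exact hsum
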